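/- Let p ∈ (0,1), and let D_p be the distribution on pairs (A,B) of subsets of [n] where each i ∈ [n] is independently included in A with probability p and independently in B with probability p. For any functions f, g: 2^[n] → [n] satisfying f(A) ∈ A whenever A ≠ ∅ and g(B) ∈ B whenever B ≠ ∅, the probability over (A,B) ~ D_p that A and B are nonempty and f(A) = g(B) is at most p/(2-p). -/

import Mathlib

section AuxiliaryLemmas
open Finset

lemma abel_aux (c w : ℕ → ℝ) (hD : ∀ k, ∑ j ∈ range k, c j ≤ 0)
    (hw0 : ∀ k, 0 ≤ w k) (hwd : ∀ k, w (k + 1) ≤ w k) :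
    ∀ n, ∑ k ∈ range n, c k * w k ≤ (∑ k ∈ range n, c k) * w n := by
  intro n
  induction n with
  | zero => simp
  | succ n ih =>
      rw [Finset.sum_range_succ, Finset.sum_range_succ (f := c)]
      calc ∑ k ∈ range n, c k * w k + c n * w n
          ≤ (∑ k ∈ range n, c k) * w n + c n * w n := by linarith [ih]
        _ = (∑ k ∈ range n, c k + c n) * w n := by ring
        _ ≤ (∑ k ∈ range n, c k + c n) * w (n + 1) := by
            have h1 : ∑ k ∈ range n, c k + c n ≤ 0 := by
              have := hD (n + 1); rwa [Finset.sum_range_succ] at this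
            nlinarith [hwd n, hw0 (n + 1)]

lemma key_seq (p : ℝ) (hp0 : 0 < p) (hp1 : p < 1) (a : ℕ → ℝ)
    (ha0 : ∀ k, 0 ≤ a k) (had : ∀ k, a (k + 1) ≤ a k)
    (hS : ∀ k, ∑ j ∈ range k, a j ≤ 1 - (1 - p) ^ k) (n : ℕ) :
    ∑ k ∈ range n, (a k) ^ 2 ≤ p / (2 - p) := by
  set q : ℕ → ℝ := fun k => p * (1 - p) ^ k with hq
  have hq0 : ∀ k, 0 ≤ q k := fun k =>
    mul_nonneg hp0.le (pow_nonneg (by linarith) k)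
  have hqd : ∀ k, q (k + 1) ≤ q k := by
    intro k
    simp only [hq, pow_succ]
    nlinarith [pow_nonneg (by linarith : (0:ℝ) ≤ 1 - p) k,
      mul_nonneg (mul_nonneg hp0.le hp0.le) (pow_nonneg (by linarith : (0:ℝ) ≤ 1 - p) k)]
  have hQ : ∀ k, ∑ j ∈ range k, q j = 1 - (1 - p) ^ k := by
    intro k
    simp only [hq]
    rw [← Finset.mul_sum, geom_sum_eq (by intro h; nlinarith [h] : (1:ℝ) - p ≠ 1)]
    field_simp [hp0.ne']
    ring
  have hD : ∀ k, ∑ j ∈ range k, (a j - q j) ≤ 0 := by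
    intro k
    rw [Finset.sum_sub_distrib, hQ k]
    linarith [hS k]
  have step1 : ∑ k ∈ range n, (a k) ^ 2 ≤ ∑ k ∈ range n, q k * a k := by
    have := abel_aux (fun k => a k - q k) a hD ha0 had n
    have hend : (∑ k ∈ range n, (a k - q k)) * a n ≤ 0 :=
      mul_nonpos_of_nonpos_of_nonneg (hD n) (ha0 n)
    have : ∑ k ∈ range n, (a k - q k) * a k ≤ 0 := le_trans this hend
    have hexp : ∑ k ∈ range n, (a k - q k) * a k
        = ∑ k ∈ range n, (a k) ^ 2 - ∑ k ∈ range n, q k * a k := by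
      rw [← Finset.sum_sub_distrib]; congr 1; funext k; ring
    linarith [hexp ▸ this]
  have step2 : ∑ k ∈ range n, q k * a k ≤ ∑ k ∈ range n, (q k) ^ 2 := by
    have := abel_aux (fun k => a k - q k) q hD hq0 hqd n
    have hend : (∑ k ∈ range n, (a k - q k)) * q n ≤ 0 :=
      mul_nonpos_of_nonpos_of_nonneg (hD n) (hq0 n)
    have h2 : ∑ k ∈ range n, (a k - q k) * q k ≤ 0 := le_trans this hend
    have hexp : ∑ k ∈ range n, (a k - q k) * q k
        = ∑ k ∈ range n, q k * a k - ∑ k ∈ range n, (q k) ^ 2 := by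
      rw [← Finset.sum_sub_distrib]; congr 1; funext k; ring
    linarith [hexp ▸ h2]
  have step3 : ∑ k ∈ range n, (q k) ^ 2 ≤ p / (2 - p) := by
    have hrw : ∀ k, (q k) ^ 2 = p ^ 2 * ((1 - p) ^ 2) ^ k := by
      intro k; simp only [hq]; rw [mul_pow, ← pow_mul, ← pow_mul, Nat.mul_comm]
    rw [Finset.sum_congr rfl (fun k _ => hrw k), ← Finset.mul_sum]
    have hr0 : (0:ℝ) ≤ (1 - p) ^ 2 := sq_nonneg _
    have hr1 : (1 - p) ^ 2 < 1 := by nlinarith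
    have hgeom : ∑ k ∈ range n, ((1 - p) ^ 2) ^ k ≤ 1 / (1 - (1 - p) ^ 2) := by
      have hx1 : (0:ℝ) < 1 - (1 - p) ^ 2 := by nlinarith
      have heq : ∑ k ∈ range n, ((1 - p) ^ 2) ^ k
          = (1 - ((1 - p) ^ 2) ^ n) / (1 - (1 - p) ^ 2) := by
        rw [geom_sum_eq hr1.ne, div_eq_div_iff (by nlinarith) (by nlinarith)]
        ring
      rw [heq]
      gcongr
      · nlinarith [pow_nonneg hr0 n]
    calc p ^ 2 * ∑ k ∈ range n, ((1 - p) ^ 2) ^ k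
        ≤ p ^ 2 * (1 / (1 - (1 - p) ^ 2)) := by nlinarith [hgeom]
      _ = p / (2 - p) := by
          have h1 : 1 - (1 - p) ^ 2 = p * (2 - p) := by ring
          rw [h1, mul_one_div, div_eq_div_iff (by nlinarith) (by linarith)]
          ring
  linarith

lemma sq_sum_le (n : ℕ) (p : ℝ) (hp0 : 0 < p) (hp1 : p < 1) (a : Fin n → ℝ)
    (h0 : ∀ i, 0 ≤ a i)
    (hT : ∀ T : Finset (Fin n), ∑ i ∈ T, a i ≤ 1 - (1 - p) ^ T.card) :
    ∑ i, (a i) ^ 2 ≤ p / (2 - p) := by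
  set σ := Tuple.sort (fun i => -a i) with hσ
  have hmono : Monotone ((fun i => -a i) ∘ σ) := Tuple.monotone_sort _
  have hanti : ∀ i j : Fin n, i ≤ j → a (σ j) ≤ a (σ i) := by
    intro i j hij
    have := hmono hij
    simp only [Function.comp_apply, neg_le_neg_iff] at this
    linarith [this]
  set A : ℕ → ℝ := fun k => if h : k < n then a (σ ⟨k, h⟩) else 0 with hA
  have hA0 : ∀ k, 0 ≤ A k := by
    intro k; simp only [hA]; split
    · exact h0 _
    · exact le_refl 0
  have hAd : ∀ k, A (k + 1) ≤ A k := by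
    intro k
    by_cases h1 : k + 1 < n
    · have hk : k < n := by omega
      simp only [hA, dif_pos h1, dif_pos hk]
      exact hanti ⟨k, hk⟩ ⟨k + 1, h1⟩ (by simp [Fin.le_def])
    · simp only [hA, dif_neg h1]
      exact hA0 k |>.trans_eq (by simp [hA])
  have hpre : ∀ k (hk : k ≤ n), ∑ j ∈ range k, A j
      = ∑ i ∈ Finset.image (fun j : Fin k => σ (Fin.castLE hk j)) Finset.univ, a i := by
    intro k hk
    rw [Finset.sum_image (by
      intro x _ y _ hxy
      exact Fin.castLE_injective hk (σ.injective hxy))]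
    rw [← Fin.sum_univ_eq_sum_range]
    refine Finset.sum_congr rfl ?_
    intro j _
    have hj : (j : ℕ) < n := lt_of_lt_of_le j.isLt hk
    simp only [hA, dif_pos hj]
    rfl
  have hS : ∀ k, ∑ j ∈ range k, A j ≤ 1 - (1 - p) ^ k := by
    intro k
    by_cases hk : k ≤ n
    · rw [hpre k hk]
      have hcard : (Finset.image (fun j : Fin k => σ (Fin.castLE hk j)) Finset.univ).card = k := by
        rw [Finset.card_image_of_injective _ (fun x y hxy =>
          Fin.castLE_injective hk (σ.injective hxy))]
        simp
      have := hT (Finset.image (fun j : Fin k => σ (Fin.castLE hk j)) Finset.univ)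
      rwa [hcard] at this
    · push_neg at hk
      have h1 : ∑ j ∈ range k, A j = ∑ j ∈ range n, A j := by
        refine (Finset.sum_subset (Finset.range_subset_range.2 hk.le) ?_).symm
        intro j _ hj
        simp only [Finset.mem_range, not_lt] at hj
        simp only [hA, dif_neg (by omega : ¬ j < n)]
      rw [h1, hpre n le_rfl]
      have hcard : (Finset.image (fun j : Fin n => σ (Fin.castLE le_rfl j)) Finset.univ).card = n := by
        rw [Finset.card_image_of_injective _ (fun x y hxy =>
          Fin.castLE_injective le_rfl (σ.injective hxy))]
        simp
      have h2 := hT (Finset.image (fun j : Fin n => σ (Fin.castLE le_rfl j)) Finset.univ)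
      rw [hcard] at h2
      have h3 : (1 - p) ^ k ≤ (1 - p) ^ n :=
        pow_le_pow_of_le_one (by linarith) (by linarith) hk.le
      linarith
  have hmain := key_seq p hp0 hp1 A hA0 hAd hS n
  have heq : ∑ k ∈ range n, (A k) ^ 2 = ∑ i, (a i) ^ 2 := by
    rw [← Fin.sum_univ_eq_sum_range]
    rw [← Equiv.sum_comp σ (fun i => (a i) ^ 2)]
    refine Finset.sum_congr rfl ?_
    intro j _
    simp only [hA, dif_pos j.isLt]
  linarith [heq ▸ hmain]

end AuxiliaryLemmas

/-- For `p ∈ (0,1)` and `(A,B)` drawn from the product of `p`-biased distributions on subsets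
of `[n]`, any strategies `f, g` with `f A ∈ A` and `g B ∈ B` on nonempty sets satisfy:
the probability that `A, B` are nonempty and `f A = g B` is at most `p/(2-p)`. -/
theorem constrained_agreement_upper (n : ℕ) (p : ℝ) (hp : p ∈ Set.Ioo (0 : ℝ) 1)
    (f g : Finset (Fin n) → Fin n)
    (hf : ∀ A : Finset (Fin n), A.Nonempty → f A ∈ A)
    (hg : ∀ B : Finset (Fin n), B.Nonempty → g B ∈ B) :
    ∑ A : Finset (Fin n), ∑ B : Finset (Fin n),
      (if A.Nonempty ∧ B.Nonempty ∧ f A = g B then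
        (p ^ A.card * (1 - p) ^ (n - A.card)) * (p ^ B.card * (1 - p) ^ (n - B.card))
      else 0)
      ≤ p / (2 - p) := by
  obtain ⟨hp0, hp1⟩ := hp
  classical
  set μ : Finset (Fin n) → ℝ := fun A => p ^ A.card * (1 - p) ^ (n - A.card) with hμ
  have hμ0 : ∀ A, 0 ≤ μ A := fun A =>
    mul_nonneg (pow_nonneg hp0.le _) (pow_nonneg (by linarith) _)
  -- the probability that A misses T is (1-p)^|T|
  have hdisj : ∀ T : Finset (Fin n),
      ∑ A : Finset (Fin n), (if A ∩ T = ∅ then μ A else 0) = (1 - p) ^ T.card := by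
    intro T
    rw [← Finset.sum_filter]
    have hset : (Finset.univ.filter (fun A : Finset (Fin n) => A ∩ T = ∅)) = Tᶜ.powerset := by
      ext A
      simp only [Finset.mem_filter, Finset.mem_univ, true_and, Finset.mem_powerset]
      constructor
      · intro h i hi
        simp only [Finset.mem_compl]
        intro hiT
        have : i ∈ A ∩ T := Finset.mem_inter.2 ⟨hi, hiT⟩
        rw [h] at this
        exact absurd this (Finset.notMem_empty i)
      · intro h
        ext i
        simp only [Finset.mem_inter, Finset.notMem_empty, iff_false, not_and]
        intro hi
        have := h hi
        simpa [Finset.mem_compl] using this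
    rw [hset]
    have hTn : T.card ≤ n := by
      have := Finset.card_le_univ T
      simpa using this
    have hTc : Tᶜ.card = n - T.card := by
      rw [Finset.card_compl]
      simp
    have h1 : ∀ A ∈ Tᶜ.powerset,
        μ A = (1 - p) ^ T.card * (p ^ A.card * (1 - p) ^ (Tᶜ.card - A.card)) := by
      intro A hA
      rw [Finset.mem_powerset] at hA
      have hAc : A.card ≤ Tᶜ.card := Finset.card_le_card hA
      have hsplit : n - A.card = T.card + (Tᶜ.card - A.card) := by omega
      simp only [hμ]
      rw [hsplit, pow_add]
      ring
    rw [Finset.sum_congr rfl h1, ← Finset.mul_sum]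
    have h2 : ∑ A ∈ Tᶜ.powerset, p ^ A.card * (1 - p) ^ (Tᶜ.card - A.card) = 1 := by
      have hpa : (1:ℝ) = ∏ _i ∈ Tᶜ, (p + (1 - p)) := by
        rw [Finset.prod_congr rfl (fun i _ => by ring : ∀ i ∈ Tᶜ, p + (1-p) = (1:ℝ))]
        simp
      rw [Finset.prod_add] at hpa
      rw [Finset.sum_congr rfl (fun A hA => by
        rw [Finset.prod_const, Finset.prod_const,
          Finset.card_sdiff_of_subset (Finset.mem_powerset.1 hA)] :
        ∀ A ∈ Tᶜ.powerset, ((∏ _i ∈ A, p) * ∏ _i ∈ Tᶜ \ A, (1 - p) : ℝ)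
          = p ^ A.card * (1 - p) ^ (Tᶜ.card - A.card))] at hpa
      exact hpa.symm
    rw [h2, mul_one]
  have htot : ∑ A : Finset (Fin n), μ A = 1 := by
    have := hdisj ∅
    simpa using this
  -- constraint for a strategy h
  have hconstr : ∀ (h : Finset (Fin n) → Fin n), (∀ A, A.Nonempty → h A ∈ A) →
      ∀ T : Finset (Fin n),
      ∑ i ∈ T, (∑ A : Finset (Fin n), if A.Nonempty ∧ h A = i then μ A else 0)
        ≤ 1 - (1 - p) ^ T.card := by
    intro h hh T
    rw [Finset.sum_comm]
    have hstep : ∀ A : Finset (Fin n),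
        (∑ i ∈ T, if A.Nonempty ∧ h A = i then μ A else 0)
          = if A.Nonempty ∧ h A ∈ T then μ A else 0 := by
      intro A
      by_cases hN : A.Nonempty
      · simp only [hN, true_and]
        exact Finset.sum_ite_eq T (h A) (fun _ => μ A)
      · simp [hN]
    rw [Finset.sum_congr rfl (fun A _ => hstep A)]
    have hpt : ∀ A : Finset (Fin n),
        (if A.Nonempty ∧ h A ∈ T then μ A else 0)
          ≤ μ A - (if A ∩ T = ∅ then μ A else 0) := by
      intro A
      by_cases hc : A.Nonempty ∧ h A ∈ T
      · have hne : A ∩ T ≠ ∅ :=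
          Finset.Nonempty.ne_empty ⟨h A, Finset.mem_inter.2 ⟨hh A hc.1, hc.2⟩⟩
        rw [if_pos hc, if_neg hne]
        simp
      · rw [if_neg hc]
        by_cases hd : A ∩ T = ∅
        · rw [if_pos hd]; simp
        · rw [if_neg hd]; simpa using hμ0 A
    calc ∑ A : Finset (Fin n), (if A.Nonempty ∧ h A ∈ T then μ A else 0)
        ≤ ∑ A : Finset (Fin n), (μ A - (if A ∩ T = ∅ then μ A else 0)) :=
          Finset.sum_le_sum (fun A _ => hpt A)
      _ = (∑ A : Finset (Fin n), μ A)
            - ∑ A : Finset (Fin n), (if A ∩ T = ∅ then μ A else 0) :=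
          Finset.sum_sub_distrib _ _
      _ = 1 - (1 - p) ^ T.card := by rw [htot, hdisj T]
  set a : Fin n → ℝ := fun i => ∑ A : Finset (Fin n), if A.Nonempty ∧ f A = i then μ A else 0
    with ha
  set b : Fin n → ℝ := fun i => ∑ B : Finset (Fin n), if B.Nonempty ∧ g B = i then μ B else 0
    with hb
  have ha0 : ∀ i, 0 ≤ a i := fun i => Finset.sum_nonneg (fun A _ => by
    split
    · exact hμ0 A
    · exact le_refl 0)
  have hb0 : ∀ i, 0 ≤ b i := fun i => Finset.sum_nonneg (fun B _ => by
    split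
    · exact hμ0 B
    · exact le_refl 0)
  have hpt2 : ∀ A B : Finset (Fin n),
      (if A.Nonempty ∧ B.Nonempty ∧ f A = g B then μ A * μ B else 0)
        = ∑ i : Fin n, (if A.Nonempty ∧ f A = i then μ A else 0)
            * (if B.Nonempty ∧ g B = i then μ B else 0) := by
    intro A B
    by_cases hA : A.Nonempty
    · by_cases hB : B.Nonempty
      · simp only [hA, hB, true_and]
        rw [Finset.sum_congr rfl (fun i _ => by
          rw [ite_mul, zero_mul, mul_ite, mul_zero] :
          ∀ i ∈ (Finset.univ : Finset (Fin n)),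
            (if f A = i then μ A else 0) * (if g B = i then μ B else 0)
              = if f A = i then (if g B = i then μ A * μ B else 0) else 0)]
        rw [Finset.sum_ite_eq Finset.univ (f A)
          (fun i => if g B = i then μ A * μ B else 0)]
        simp only [Finset.mem_univ, if_true]
        by_cases he : f A = g B
        · rw [if_pos he, if_pos he.symm]
        · rw [if_neg he, if_neg (fun hgb => he hgb.symm)]
      · simp [hB]
    · simp [hA]
  have hfact : ∑ A : Finset (Fin n), ∑ B : Finset (Fin n),
      (if A.Nonempty ∧ B.Nonempty ∧ f A = g B then μ A * μ B else 0)
        = ∑ i : Fin n, a i * b i := by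
    rw [Finset.sum_congr rfl (fun A _ => Finset.sum_congr rfl (fun B _ => hpt2 A B))]
    rw [Finset.sum_congr rfl (fun A _ => Finset.sum_comm)]
    rw [Finset.sum_comm]
    refine Finset.sum_congr rfl ?_
    intro i _
    simp only [ha, hb]
    rw [Finset.sum_mul]
    refine Finset.sum_congr rfl ?_
    intro A _
    rw [Finset.mul_sum]
  calc ∑ A : Finset (Fin n), ∑ B : Finset (Fin n),
      (if A.Nonempty ∧ B.Nonempty ∧ f A = g B then μ A * μ B else 0)
      = ∑ i : Fin n, a i * b i := hfact
    _ ≤ ∑ i : Fin n, ((a i) ^ 2 + (b i) ^ 2) / 2 :=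
        Finset.sum_le_sum (fun i _ => by nlinarith [sq_nonneg (a i - b i)])
    _ = ((∑ i : Fin n, (a i) ^ 2) + ∑ i : Fin n, (b i) ^ 2) / 2 := by
        rw [← Finset.sum_add_distrib, Finset.sum_div]
    _ ≤ (p / (2 - p) + p / (2 - p)) / 2 := by
        have h1 := sq_sum_le n p hp0 hp1 a ha0 (hconstr f hf)
        have h2 := sq_sum_le n p hp0 hp1 b hb0 (hconstr g hg)
        linarith
    _ = p / (2 - p) := by ring
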